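/- Let L be a nonnegative random variable with an asymptotically exponential tail with decay rate μ > 0, let M ≥ 2 be an integer and λ, ν > 0. Define the random variable N̲ by P[N̲ > n] = E[(1 − e^{−L(M−1)(λ∧ν)})^n] for n ∈ ℕ. Then lim_{n→∞} (log P[N̲ > n]) / (log n) = −μ / ((M−1)(λ∧ν)). -/

import Mathlib

open MeasureTheory Filter


lemma aux_base {l c : ℝ} (hl : 0 ≤ l) (hc : 0 < c) :
    0 ≤ 1 - Real.exp (-(l * c)) ∧ 1 - Real.exp (-(l * c)) ≤ 1 := by
  constructor
  · have : Real.exp (-(l * c)) ≤ 1 := Real.exp_le_one_iff.mpr (by nlinarith)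
    linarith
  · have := Real.exp_pos (-(l * c)); linarith

lemma aux_int {Ω : Type*} {mΩ : MeasurableSpace Ω} (P : Measure Ω) [IsProbabilityMeasure P]
    (L : Ω → ℝ) (hLm : Measurable L) (hLnn : ∀ ω, 0 ≤ L ω) (c : ℝ) (hc : 0 < c) (n : ℕ) :
    Integrable (fun ω => (1 - Real.exp (-(L ω * c)))^n) P := by
  apply Integrable.mono' (integrable_const (1:ℝ))
  · exact (((measurable_const.sub ((hLm.mul_const c).neg.exp)).pow_const n)).aestronglyMeasurable
  · filter_upwards with ω
    rw [Real.norm_eq_abs, abs_of_nonneg (pow_nonneg (aux_base (hLnn ω) hc).1 n)]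
    exact pow_le_one₀ (aux_base (hLnn ω) hc).1 (aux_base (hLnn ω) hc).2

lemma aux_lb {Ω : Type*} {mΩ : MeasurableSpace Ω} (P : Measure Ω) [IsProbabilityMeasure P]
    (L : Ω → ℝ) (hLm : Measurable L) (hLnn : ∀ ω, 0 ≤ L ω) (c : ℝ) (hc : 0 < c)
    (x : ℝ) (hx : 0 ≤ x) (n : ℕ) :
    (1 - Real.exp (-(x*c)))^n * (P {ω | L ω > x}).toReal
      ≤ ∫ ω, (1 - Real.exp (-(L ω * c)))^n ∂P := by
  have hs : MeasurableSet {ω | L ω > x} := measurableSet_lt measurable_const hLm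
  have h := integral_indicator_const ((1 - Real.exp (-(x*c)))^n) hs (μ := P)
  rw [smul_eq_mul, measureReal_def] at h
  rw [mul_comm, ← h]
  apply integral_mono _ (aux_int P L hLm hLnn c hc n)
  · intro ω
    by_cases hω : ω ∈ {ω | L ω > x}
    · rw [Set.indicator_of_mem hω]
      apply pow_le_pow_left₀ (aux_base hx hc).1
      have : Real.exp (-(L ω * c)) ≤ Real.exp (-(x * c)) := by
        apply Real.exp_le_exp.mpr; nlinarith [Set.mem_setOf.mp hω]
      linarith
    · rw [Set.indicator_of_notMem hω]
      exact pow_nonneg (aux_base (hLnn ω) hc).1 n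
  · exact (integrable_const _).indicator hs

lemma aux_ub {Ω : Type*} {mΩ : MeasurableSpace Ω} (P : Measure Ω) [IsProbabilityMeasure P]
    (L : Ω → ℝ) (hLm : Measurable L) (hLnn : ∀ ω, 0 ≤ L ω) (c : ℝ) (hc : 0 < c)
    (x : ℝ) (hx : 0 ≤ x) (n : ℕ) :
    ∫ ω, (1 - Real.exp (-(L ω * c)))^n ∂P
      ≤ (P {ω | L ω > x}).toReal + (1 - Real.exp (-(x*c)))^n := by
  have hs : MeasurableSet {ω | L ω > x} := measurableSet_lt measurable_const hLm
  have h := integral_indicator_const (1:ℝ) hs (μ := P)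
  rw [smul_eq_mul, mul_one, measureReal_def] at h
  calc ∫ ω, (1 - Real.exp (-(L ω * c)))^n ∂P
      ≤ ∫ ω, (Set.indicator {ω | L ω > x} (fun _ => (1:ℝ)) ω + (1 - Real.exp (-(x*c)))^n) ∂P := by
        apply integral_mono (aux_int P L hLm hLnn c hc n)
          (((integrable_const _).indicator hs).add (integrable_const _))
        intro ω
        simp only [Pi.add_apply]
        by_cases hω : ω ∈ {ω | L ω > x}
        · rw [Set.indicator_of_mem hω]
          have h1 := pow_le_one₀ (aux_base (hLnn ω) hc).1 (aux_base (hLnn ω) hc).2 (n := n)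
          have h2 := pow_nonneg (aux_base hx hc).1 n
          linarith
        · rw [Set.indicator_of_notMem hω, zero_add]
          apply pow_le_pow_left₀ (aux_base (hLnn ω) hc).1
          have hLx : L ω ≤ x := le_of_not_gt (Set.mem_setOf.not.mp hω)
          have : Real.exp (-(x * c)) ≤ Real.exp (-(L ω * c)) := by
            apply Real.exp_le_exp.mpr; nlinarith
          linarith
    _ = (P {ω | L ω > x}).toReal + (1 - Real.exp (-(x*c)))^n := by
        rw [integral_add (((integrable_const _).indicator hs)) (integrable_const _), h,
          integral_const]
        simp


lemma aux_xtend (c d : ℝ) (hc : 0 < c) (hd : 0 < d) :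
    Tendsto (fun n : ℕ => d * Real.log n / c) atTop atTop :=
  ((Real.tendsto_log_atTop.comp tendsto_natCast_atTop_atTop).const_mul_atTop hd).atTop_div_const hc

lemma aux_Ttend {T : ℝ → ℝ} {μ : ℝ}
    (htail : Tendsto (fun x => Real.log (T x) / x) atTop (nhds (-μ)))
    (c d : ℝ) (hc : 0 < c) (hd : 0 < d) :
    Tendsto (fun n : ℕ => Real.log (T (d * Real.log n / c)) / Real.log n) atTop
      (nhds (-(μ * d / c))) := by
  have h1 := (htail.comp (aux_xtend c d hc hd)).mul_const (d / c)
  have heq : (fun n : ℕ => (Real.log (T (d * Real.log n / c)) / (d * Real.log n / c)) * (d/c))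
      =ᶠ[atTop] fun n : ℕ => Real.log (T (d * Real.log n / c)) / Real.log n := by
    filter_upwards [eventually_gt_atTop 1] with n hn
    have hln : 0 < Real.log n := Real.log_pos (by exact_mod_cast hn)
    field_simp
  have h2 := h1.congr' heq
  convert h2 using 2
  field_simp

lemma aux_w1 (d : ℝ) (hd : 1 < d) :
    Tendsto (fun n : ℕ => (n:ℝ) * Real.log (1 - Real.exp (-(d * Real.log n))) / Real.log n)
      atTop (nhds 0) := by
  apply squeeze_zero_norm' (a := fun n : ℕ => 2 * (n:ℝ) ^ (1 - d))
  · filter_upwards [eventually_ge_atTop 3] with n hn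
    have hN3 : (3:ℝ) ≤ (n:ℝ) := by exact_mod_cast hn
    have hN1 : (1:ℝ) < (n:ℝ) := by linarith
    have hNpos : (0:ℝ) < (n:ℝ) := by linarith
    have hln1 : 1 ≤ Real.log n := by
      rw [Real.le_log_iff_exp_le hNpos]
      calc Real.exp 1 ≤ 2.7182818286 := le_of_lt Real.exp_one_lt_d9
        _ ≤ (n:ℝ) := by linarith
    have hexp : Real.exp (-(d * Real.log (n:ℝ))) = (n:ℝ)^(-d) := by
      rw [Real.rpow_def_of_pos hNpos]; ring_nf
    rw [hexp]
    set t : ℝ := (n:ℝ)^(-d) with htdef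
    have htpos : 0 < t := Real.rpow_pos_of_pos hNpos _
    have htle : t ≤ 1/2 := by
      have h1 : t ≤ (n:ℝ)^(-1:ℝ) :=
        Real.rpow_le_rpow_of_exponent_le (le_of_lt hN1) (by linarith)
      rw [Real.rpow_neg_one] at h1
      have : (n:ℝ)⁻¹ ≤ 1/3 := by
        rw [inv_le_comm₀ hNpos (by norm_num)] ; linarith
      linarith
    have h1t : 0 < 1 - t := by linarith
    have hloglb : -Real.log (1 - t) ≤ 2*t := by
      have h2 := Real.log_le_sub_one_of_pos (inv_pos.2 h1t)
      rw [Real.log_inv] at h2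
      have h3 : (1-t)⁻¹ - 1 ≤ 2*t := by
        rw [sub_le_iff_le_add, inv_le_iff_one_le_mul₀ h1t]
        nlinarith
      linarith
    have hlogneg : Real.log (1 - t) ≤ 0 := Real.log_nonpos (by linarith) (by linarith)
    have hnt : (n:ℝ) * t = (n:ℝ)^(1-d) := by
      rw [show (1:ℝ)-d = 1 + -d by ring, Real.rpow_add hNpos, Real.rpow_one, htdef]
    rw [Real.norm_eq_abs, abs_div, abs_mul, abs_of_nonneg (le_of_lt hNpos),
      abs_of_nonneg (by linarith : (0:ℝ) ≤ Real.log n), abs_of_nonpos hlogneg]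
    rw [div_le_iff₀ (by linarith : (0:ℝ) < Real.log n)]
    calc (n:ℝ) * -Real.log (1-t) ≤ (n:ℝ) * (2*t) := by
          apply mul_le_mul_of_nonneg_left hloglb (le_of_lt hNpos)
      _ = 2 * ((n:ℝ)*t) := by ring
      _ = 2 * (n:ℝ)^(1-d) := by rw [hnt]
      _ ≤ 2 * (n:ℝ)^(1-d) * Real.log n := by
          nlinarith [Real.rpow_pos_of_pos hNpos (1-d)]
  · have h0 : Tendsto (fun x : ℝ => x ^ (-(d-1))) atTop (nhds 0) :=
      tendsto_rpow_neg_atTop (by linarith)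
    have h1 := (h0.comp tendsto_natCast_atTop_atTop).const_mul (2:ℝ)
    simp only [mul_zero] at h1
    have heq : (fun n : ℕ => 2 * (n:ℝ)^(1-d))
        = fun n : ℕ => 2 * ((fun x : ℝ => x ^ (-(d-1))) ∘ (Nat.cast : ℕ → ℝ)) n := by
      funext n; simp only [Function.comp_apply]; ring_nf
    rw [heq]; exact h1

lemma aux_main {a : ℕ → ℝ} {T : ℝ → ℝ} {μ c : ℝ} (hμ : 0 < μ) (hc : 0 < c)
    (hT0 : ∀ x, 0 ≤ T x)
    (htail : Tendsto (fun x => Real.log (T x) / x) atTop (nhds (-μ)))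
    (hlb : ∀ x : ℝ, 0 ≤ x → ∀ n : ℕ, (1 - Real.exp (-(x*c)))^n * T x ≤ a n)
    (hub : ∀ x : ℝ, 0 ≤ x → ∀ n : ℕ, a n ≤ T x + (1 - Real.exp (-(x*c)))^n) :
    Tendsto (fun n : ℕ => Real.log (a n) / Real.log n) atTop (nhds (-(μ/c))) := by
  have hrpos : 0 < μ / c := div_pos hμ hc
  have hTposev : ∀ᶠ x in atTop, 0 < T x := by
    filter_upwards [(tendsto_order.1 htail).2 (-(μ/2)) (by linarith), eventually_gt_atTop 0]
      with x hx hx0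
    rcases lt_or_eq_of_le (hT0 x) with h | h
    · exact h
    · exfalso; rw [← h, Real.log_zero, zero_div] at hx; linarith
  obtain ⟨X₀, hX₀⟩ := eventually_atTop.1 hTposev
  have hμ1ev : ∀ᶠ x in atTop, -(μ+1) < Real.log (T x) / x :=
    (tendsto_order.1 htail).1 (-(μ+1)) (by linarith)
  refine tendsto_order.2 ⟨?_, ?_⟩
  · -- lower bound part
    intro b hb
    have h1 : 0 < -b - μ/c := by linarith
    set ε := (-b - μ/c)/(2*(μ/c)) with hεdef
    have hε0 : 0 < ε := div_pos h1 (by positivity)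
    set d := 1 + ε with hddef
    have hd1 : 1 < d := by rw [hddef]; linarith
    have hd0 : 0 < d := by linarith
    have hlim := (aux_w1 d hd1).add (aux_Ttend htail c d hc hd0)
    have hbd : b < 0 + -(μ * d / c) := by
      rw [zero_add]
      have hrε : (μ/c) * ε = (-b - μ/c)/2 := by
        rw [hεdef]; field_simp
      have hμdc : μ * d / c = μ/c + (μ/c) * ε := by rw [hddef]; field_simp
      rw [hμdc]; linarith
    have hev := hlim.eventually_const_lt hbd
    have hx : Tendsto (fun n : ℕ => d * Real.log n / c) atTop atTop := aux_xtend c d hc hd0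
    filter_upwards [hev, eventually_ge_atTop 2,
      hx.eventually (eventually_ge_atTop (max X₀ 0))] with n hbn hn2 hy
    refine lt_of_lt_of_le hbn ?_
    have hln : 0 < Real.log (n:ℝ) := Real.log_pos (by exact_mod_cast hn2)
    set y := d * Real.log (n:ℝ) / c with hydef
    have hy0 : 0 ≤ y := le_trans (le_max_right _ _) hy
    have hyX : X₀ ≤ y := le_trans (le_max_left _ _) hy
    have hyc : y * c = d * Real.log n := by rw [hydef]; field_simp
    have hTy : 0 < T y := hX₀ y hyX
    have hbase : 0 < 1 - Real.exp (-(d * Real.log (n:ℝ))) := by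
      have : Real.exp (-(d * Real.log (n:ℝ))) < 1 := by
        rw [Real.exp_lt_one_iff]; nlinarith
      linarith
    have hlb' := hlb y hy0 n
    rw [hyc] at hlb'
    have hβ : 0 < (1 - Real.exp (-(d * Real.log (n:ℝ))))^n * T y :=
      mul_pos (pow_pos hbase n) hTy
    have hloga := Real.log_le_log hβ hlb'
    rw [Real.log_mul (ne_of_gt (pow_pos hbase n)) (ne_of_gt hTy), Real.log_pow] at hloga
    rw [← add_div]
    gcongr
  · -- upper bound part
    intro b hb
    have h1 : 0 < b + μ/c := by linarith
    set ε := min (1/2 : ℝ) ((b + μ/c)/(2*(μ/c))) with hεdef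
    have hε0 : 0 < ε := lt_min (by norm_num) (div_pos h1 (by positivity))
    have hε2 : ε ≤ 1/2 := min_le_left _ _
    set d := 1 - ε with hddef
    have hd0 : 0 < d := by rw [hddef]; linarith
    set K := (μ+1)*d/c with hKdef
    have hKpos : 0 < K := by rw [hKdef]; positivity
    have hlim := ((tendsto_const_nhds (x := Real.log 2)).div_atTop
      (Real.tendsto_log_atTop.comp tendsto_natCast_atTop_atTop)).add (aux_Ttend htail c d hc hd0)
    have hbd : 0 + -(μ * d / c) < b := by
      rw [zero_add]
      have hrε : (μ/c) * ε ≤ (b + μ/c)/2 := by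
        have hle : ε ≤ (b + μ/c)/(2*(μ/c)) := min_le_right _ _
        calc (μ/c)*ε ≤ (μ/c) * ((b+μ/c)/(2*(μ/c))) :=
              mul_le_mul_of_nonneg_left hle (le_of_lt hrpos)
          _ = (b+μ/c)/2 := by field_simp
      have hμdc : μ * d / c = μ/c - (μ/c) * ε := by rw [hddef]; field_simp
      rw [hμdc]; linarith
    have hev := hlim.eventually_lt_const hbd
    have hx : Tendsto (fun n : ℕ => d * Real.log n / c) atTop atTop := aux_xtend c d hc hd0
    have hlogbd : ∀ᶠ n : ℕ in atTop, K * Real.log (n:ℝ) ≤ (n:ℝ)^ε := by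
      have hlo := (isLittleO_log_rpow_atTop hε0).bound
        (show (0:ℝ) < 1/(K+1) by positivity)
      filter_upwards [tendsto_natCast_atTop_atTop.eventually hlo, eventually_ge_atTop 1]
        with n hn hn1
      have h1n : (1:ℝ) ≤ (n:ℝ) := by exact_mod_cast hn1
      rw [Real.norm_eq_abs, Real.norm_eq_abs, abs_of_nonneg (Real.log_nonneg h1n),
        abs_of_nonneg (Real.rpow_nonneg (by linarith) ε)] at hn
      have h2 := mul_le_mul_of_nonneg_left hn (le_of_lt hKpos)
      have h3 : 0 ≤ (n:ℝ)^ε := Real.rpow_nonneg (by linarith) ε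
      have h4 : K / (K+1) ≤ 1 := by
        rw [div_le_one (by linarith)]; linarith
      have h5 : K * (1/(K+1) * (n:ℝ)^ε) = K/(K+1) * (n:ℝ)^ε := by ring
      have h6 := mul_le_mul_of_nonneg_right h4 h3
      rw [h5] at h2
      linarith
    have hx2 : Tendsto (fun n : ℕ => 2 * Real.log n / c) atTop atTop :=
      aux_xtend c 2 hc two_pos
    have hapos : ∀ᶠ n : ℕ in atTop, 0 < a n := by
      filter_upwards [eventually_ge_atTop 2,
        hx2.eventually (eventually_ge_atTop (max X₀ 0))] with n hn2 hy
      have hy0 : 0 ≤ 2 * Real.log (n:ℝ) / c := le_trans (le_max_right _ _) hy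
      have hyX : X₀ ≤ 2 * Real.log (n:ℝ) / c := le_trans (le_max_left _ _) hy
      have hln : 0 < Real.log (n:ℝ) := Real.log_pos (by exact_mod_cast hn2)
      have hyc : (2 * Real.log (n:ℝ) / c) * c = 2 * Real.log (n:ℝ) := by field_simp
      have hbase : 0 < 1 - Real.exp (-((2 * Real.log (n:ℝ) / c) * c)) := by
        rw [hyc]
        have : Real.exp (-(2 * Real.log (n:ℝ))) < 1 := by
          rw [Real.exp_lt_one_iff]; linarith
        linarith
      exact lt_of_lt_of_le (mul_pos (pow_pos hbase n) (hX₀ _ hyX)) (hlb _ hy0 n)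
    filter_upwards [hev, hapos, eventually_ge_atTop 2, hlogbd,
      hx.eventually (eventually_ge_atTop (max X₀ 0)),
      hx.eventually hμ1ev] with n hbn han hn2 hKn hy hμ1
    refine lt_of_le_of_lt ?_ hbn
    set y := d * Real.log (n:ℝ) / c with hydef
    have hln : 0 < Real.log (n:ℝ) := Real.log_pos (by exact_mod_cast hn2)
    have hy0 : 0 ≤ y := le_trans (le_max_right _ _) hy
    have hyX : X₀ ≤ y := le_trans (le_max_left _ _) hy
    have hTy : 0 < T y := hX₀ y hyX
    have hyc : y * c = d * Real.log (n:ℝ) := by rw [hydef]; field_simp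
    have hypos : 0 < y := by rw [hydef]; positivity
    have hTylb : Real.exp (-((μ+1) * y)) ≤ T y := by
      have hlt : -(μ+1) * y < Real.log (T y) := (lt_div_iff₀ hypos).1 hμ1
      calc Real.exp (-((μ+1)*y)) ≤ Real.exp (Real.log (T y)) :=
            Real.exp_le_exp.mpr (by linarith)
        _ = T y := Real.exp_log hTy
    have hKy : K * Real.log (n:ℝ) = (μ+1) * y := by
      rw [hydef, hKdef]; field_simp
    have hsecond : (1 - Real.exp (-(y * c)))^n ≤ T y := by
      rw [hyc]
      have hNpos : (0:ℝ) < (n:ℝ) := by positivity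
      have he1 : Real.exp (-(d * Real.log (n:ℝ))) ≤ 1 := by
        rw [Real.exp_le_one_iff]; nlinarith
      have step1 : (1 - Real.exp (-(d * Real.log (n:ℝ))))^n
          ≤ Real.exp (-Real.exp (-(d * Real.log (n:ℝ))))^n := by
        apply pow_le_pow_left₀ (by linarith)
        linarith [Real.add_one_le_exp (-Real.exp (-(d * Real.log (n:ℝ))))]
      have step2 : Real.exp (-Real.exp (-(d * Real.log (n:ℝ))))^n
          = Real.exp (-((n:ℝ) * Real.exp (-(d * Real.log (n:ℝ))))) := by
        rw [← Real.exp_nat_mul]; ring_nf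
      have he : Real.exp (-(d * Real.log (n:ℝ))) = (n:ℝ)^(-d) := by
        rw [Real.rpow_def_of_pos hNpos]; ring_nf
      have hne : (n:ℝ) * (n:ℝ)^(-d) = (n:ℝ)^ε := by
        rw [show ε = 1 + -d by rw [hddef]; ring, Real.rpow_add hNpos, Real.rpow_one]
      have step3 : Real.exp (-((n:ℝ) * Real.exp (-(d * Real.log (n:ℝ)))))
          ≤ Real.exp (-((μ+1) * y)) := by
        apply Real.exp_le_exp.mpr
        rw [he, hne, ← hKy]
        linarith
      calc (1 - Real.exp (-(d * Real.log (n:ℝ))))^n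
          ≤ Real.exp (-Real.exp (-(d * Real.log (n:ℝ))))^n := step1
        _ = Real.exp (-((n:ℝ) * Real.exp (-(d * Real.log (n:ℝ))))) := step2
        _ ≤ Real.exp (-((μ+1) * y)) := step3
        _ ≤ T y := hTylb
    have hub' := hub y hy0 n
    have haT : a n ≤ 2 * T y := by linarith
    have hloga : Real.log (a n) ≤ Real.log 2 + Real.log (T y) := by
      rw [← Real.log_mul two_ne_zero (ne_of_gt hTy)]
      exact Real.log_le_log han haT
    simp only [Function.comp_apply]
    rw [← add_div]
    gcongr



/-- Proposition 1, eq. (5): power law for the lower-bounding number of retransmissions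
`P[N̲ > n] = E[(1 - e^{-L(M-1)(λ∧ν)})^n]` in finite population ALOHA. -/
theorem stmt0 {Ω : Type*} {mΩ : MeasurableSpace Ω} (P : Measure Ω) [IsProbabilityMeasure P]
    (L : Ω → ℝ) (hLm : Measurable L) (hLnn : ∀ ω, 0 ≤ L ω)
    (μ lam ν : ℝ) (hμ : 0 < μ) (hlam : 0 < lam) (hν : 0 < ν)
    (M : ℕ) (hM : 2 ≤ M)
    (htail : Tendsto (fun x : ℝ => Real.log (P {ω | L ω > x}).toReal / x) atTop (nhds (-μ))) :
    Tendsto (fun n : ℕ =>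
        Real.log (∫ ω, (1 - Real.exp (-(L ω * ((M : ℝ) - 1) * min lam ν))) ^ n ∂P)
          / Real.log n) atTop
      (nhds (-(μ / (((M : ℝ) - 1) * min lam ν)))) := by

  have hM2 : (2:ℝ) ≤ (M:ℝ) := by exact_mod_cast hM
  have hc : 0 < ((M:ℝ) - 1) * min lam ν := mul_pos (by linarith) (lt_min hlam hν)
  have hfun : (fun n : ℕ =>
        Real.log (∫ ω, (1 - Real.exp (-(L ω * ((M : ℝ) - 1) * min lam ν))) ^ n ∂P)
          / Real.log n)
      = fun n : ℕ =>
        Real.log (∫ ω, (1 - Real.exp (-(L ω * (((M : ℝ) - 1) * min lam ν)))) ^ n ∂P)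
          / Real.log n := by
    funext n; simp only [mul_assoc]
  rw [hfun]
  exact aux_main hμ hc (fun x => ENNReal.toReal_nonneg) htail
    (aux_lb P L hLm hLnn _ hc) (aux_ub P L hLm hLnn _ hc)
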